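/- For even n ≥ 2, the (n/2)-th power of β_π equals the order-reversing involution i ↦ n + 1 - i. -/
import Mathlib


/-- The permutator `β_π` on `{1,…,n}` (1-indexed): `β_π(1)=2`, `β_π(n)=n-1`,
and `β_π(i)=i+2·(-1)^i` for `1<i<n`. -/
def betaPi (n : ℕ) (i : ℕ) : ℕ :=
  if i = 1 then 2 else if i = n then n - 1 else if Even i then i + 2 else i - 2

/-- The element at position `j` of the cycle `1 → 2 → 4 → ⋯ → n → n-1 → ⋯ → 3 → 1`. -/
def bpPos (n j : ℕ) : ℕ :=
  if j = 0 then 1 else if j ≤ n / 2 then 2 * j else 2 * (n - j) + 1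

lemma bpPos_step (n : ℕ) (hn : 2 ≤ n) (he : Even n) (j : ℕ) (hj : j < n) :
    betaPi n (bpPos n j) = bpPos n ((j + 1) % n) := by
  have hn2 : n % 2 = 0 := Nat.even_iff.mp he
  rcases eq_or_lt_of_le (Nat.succ_le_of_lt hj) with hje | hje
  · -- j + 1 = n
    have h1 : (j + 1) % n = 0 := by
      have hje' : j + 1 = n := hje
      rw [hje', Nat.mod_self]
    rw [h1]
    unfold betaPi bpPos
    split_ifs <;> simp_all [Nat.even_iff] <;> omega
  · have h1 : (j + 1) % n = j + 1 := Nat.mod_eq_of_lt hje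
    rw [h1]
    unfold betaPi bpPos
    split_ifs <;> simp_all [Nat.even_iff] <;> omega

lemma bpPos_iter (n : ℕ) (hn : 2 ≤ n) (he : Even n) :
    ∀ k, ∀ j < n, (betaPi n)^[k] (bpPos n j) = bpPos n ((j + k) % n) := by
  intro k
  induction k with
  | zero => intro j hj; simp [Nat.mod_eq_of_lt hj]
  | succ k ih =>
    intro j hj
    rw [Function.iterate_succ_apply, bpPos_step n hn he j hj,
      ih _ (Nat.mod_lt _ (by omega))]
    congr 1
    rw [Nat.mod_add_mod]
    congr 1
    omega

/-- For even `n ≥ 2`, the `(n/2)`-th power of `β_π` is the order-reversing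
involution `i ↦ n + 1 - i` on `{1,…,n}`. -/
theorem betaPi_half_power (n : ℕ) (hn : 2 ≤ n) (heven : Even n) :
    ∀ i ∈ Set.Icc 1 n, (betaPi n)^[n / 2] i = n + 1 - i := by
  intro i hi
  obtain ⟨h1, h2⟩ := hi
  have hn2 : n % 2 = 0 := Nat.even_iff.mp heven
  rcases Nat.even_or_odd i with hie | hio
  · -- i even, use j = i / 2
    have hi2 : i % 2 = 0 := Nat.even_iff.mp hie
    have hji : bpPos n (i / 2) = i := by unfold bpPos; split_ifs <;> omega
    have hit := bpPos_iter n hn heven (n / 2) (i / 2) (by omega)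
    rw [hji] at hit
    rw [hit]
    by_cases hin : i = n
    · subst hin
      have hm : (i / 2 + i / 2) % i = 0 := by
        have : i / 2 + i / 2 = i := by omega
        rw [this, Nat.mod_self]
      rw [hm]
      unfold bpPos
      simp
    · have hm : (i / 2 + n / 2) % n = i / 2 + n / 2 := Nat.mod_eq_of_lt (by omega)
      rw [hm]
      unfold bpPos
      split_ifs <;> omega
  · have hi2 : i % 2 = 1 := Nat.odd_iff.mp hio
    by_cases hi1 : i = 1
    · subst hi1
      have hit := bpPos_iter n hn heven (n / 2) 0 (by omega)
      have hj0 : bpPos n 0 = 1 := by unfold bpPos; simp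
      rw [hj0] at hit
      rw [hit]
      have hm : (0 + n / 2) % n = n / 2 := by
        rw [Nat.zero_add]; exact Nat.mod_eq_of_lt (by omega)
      rw [hm]
      unfold bpPos
      split_ifs <;> omega
    · -- i odd, 3 ≤ i ≤ n - 1, use j = n - (i-1)/2
      have hji : bpPos n (n - (i - 1) / 2) = i := by
        unfold bpPos; split_ifs <;> omega
      have hit := bpPos_iter n hn heven (n / 2) (n - (i - 1) / 2) (by omega)
      rw [hji] at hit
      rw [hit]
      have hm : (n - (i - 1) / 2 + n / 2) % n = n / 2 - (i - 1) / 2 := by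
        have : n - (i - 1) / 2 + n / 2 = n + (n / 2 - (i - 1) / 2) := by omega
        rw [this, Nat.add_mod_left, Nat.mod_eq_of_lt (by omega)]
      rw [hm]
      unfold bpPos
      split_ifs <;> omega
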